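/- The Euclidean spheres S(0,R) ⊂ ℝ³\{0} have zero extrinsic curvature with respect to the radial conformal metric g_F for all R > 0 if and only if F(t) = λ√t for some nonzero constant λ. -/

import Mathlib

/- The spheres S(0,R) have zero extrinsic curvature (F(R²)−2F'(R²)R²)²/R² in the
   radial conformal metric g_F for all R > 0 iff F(t) = λ√t for some λ ≠ 0. -/

theorem stmt8 (F F' : ℝ → ℝ)
    (hd : ∀ t > (0 : ℝ), HasDerivAt F (F' t) t)
    (hne : ∀ t > (0 : ℝ), F t ≠ 0) :
    (∀ R > (0 : ℝ), (F (R ^ 2) - 2 * F' (R ^ 2) * R ^ 2) ^ 2 / R ^ 2 = 0) ↔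
    ∃ l : ℝ, l ≠ 0 ∧ ∀ t > (0 : ℝ), F t = l * Real.sqrt t := by
  constructor
  · intro h
    -- First get the ODE: F t = 2 t F' t for all t > 0
    have ode : ∀ t > (0 : ℝ), F t - 2 * F' t * t = 0 := by
      intro t ht
      have hR : (0:ℝ) < Real.sqrt t := Real.sqrt_pos.mpr ht
      have := h (Real.sqrt t) hR
      rw [Real.sq_sqrt ht.le] at this
      field_simp at this
      simpa using this
    -- g t = F t / sqrt t has zero derivative on Ioi 0
    set g : ℝ → ℝ := fun t => F t / Real.sqrt t with hg
    have hgd : ∀ t ∈ Set.Ioi (0:ℝ), HasDerivWithinAt g 0 (Set.Ioi 0) t := by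
      intro t ht
      have ht' : (0:ℝ) < t := ht
      have hs : Real.sqrt t ≠ 0 := (Real.sqrt_pos.mpr ht').ne'
      have hder := (hd t ht').div (Real.hasDerivAt_sqrt ht'.ne') hs
      have heq : (F' t * Real.sqrt t - F t * (1 / (2 * Real.sqrt t))) / Real.sqrt t ^ 2 = 0 := by
        have hode := ode t ht'
        have hst : Real.sqrt t ^ 2 = t := Real.sq_sqrt ht'.le
        rw [div_eq_zero_iff]
        left
        have : F' t * Real.sqrt t * (2 * Real.sqrt t) - F t = 0 := by
          have : F' t * (Real.sqrt t * (2 * Real.sqrt t)) = 2 * F' t * t := by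
            rw [show Real.sqrt t * (2 * Real.sqrt t) = 2 * Real.sqrt t ^ 2 by ring, hst]; ring
          rw [mul_assoc, this]
          linarith [hode]
        field_simp
        linarith [this]
      rw [heq] at hder
      exact hder.hasDerivWithinAt
    have hconst : ∀ x ∈ Set.Ioi (0:ℝ), ∀ y ∈ Set.Ioi (0:ℝ), g x = g y := by
      intro x hx y hy
      have := Convex.norm_image_sub_le_of_norm_hasDerivWithin_le
        (f := g) (f' := fun _ => 0) (s := Set.Ioi (0:ℝ)) (C := 0)
        hgd (fun _ _ => by simp) (convex_Ioi 0) hx hy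
      have h0 : ‖g y - g x‖ ≤ 0 := by simpa using this
      have := norm_le_zero_iff.mp h0
      linarith [sub_eq_zero.mp this]
    refine ⟨F 1, ?_, ?_⟩
    · simpa using hne 1 one_pos
    · intro t ht
      have := hconst 1 (by norm_num) t ht
      simp only [hg, Real.sqrt_one, div_one] at this
      have hs : Real.sqrt t ≠ 0 := (Real.sqrt_pos.mpr ht).ne'
      field_simp at this ⊢
      linarith [this]
  · rintro ⟨l, hl, hF⟩
    intro R hR
    have hR2 : (0:ℝ) < R ^ 2 := by positivity
    -- F' (R²) = l / (2R) since F = l√· on a neighborhood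
    have hder : HasDerivAt F (l * (1 / (2 * Real.sqrt (R ^ 2)))) (R ^ 2) := by
      have h1 : HasDerivAt (fun t => l * Real.sqrt t) (l * (1 / (2 * Real.sqrt (R ^ 2)))) (R ^ 2) :=
        (Real.hasDerivAt_sqrt hR2.ne').const_mul l
      apply h1.congr_of_eventuallyEq
      filter_upwards [eventually_gt_nhds hR2] with t ht using (hF t ht)
    have huniq : F' (R ^ 2) = l * (1 / (2 * Real.sqrt (R ^ 2))) :=
      (hd (R ^ 2) hR2).unique hder
    have hsq : Real.sqrt (R ^ 2) = R := by
      rw [Real.sqrt_sq hR.le]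
    rw [hF (R ^ 2) hR2, huniq, hsq]
    have : l * R - 2 * (l * (1 / (2 * R))) * R ^ 2 = 0 := by
      field_simp
      ring
    rw [this]
    simp
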